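/- (Lemma 4, 'Lemma 13') Let B ≥ 1, ρ ∈ [0,1], and let O be a duplicate-free list of products with |O| ≤ B that maximizes f among all duplicate-free lists of length at most B, with f(O) > 0. Then there exists a pair (𝒮, y) feasible for problem P.A.1 — i.e., y ∉ 𝒮, Π_{i∈𝒮} θ_i ≥ ρ, and |𝒮| < B — such that g(𝒮 ∪ {y}) ≥ (1 − ρ) f(O). Consequently the optimal value of P.A.1 is at least (1 − ρ) f(O). -/

import Mathlib

/-- MNL expected revenue of a finite set `S` of products, where product `i`
has revenue `α i` and preference weight `β i`. -/
noncomputable def g (α β : ℕ → ℝ) (S : Finset ℕ) : ℝ :=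
  (∑ i ∈ S, α i * β i) / ((∑ i ∈ S, β i) + 1)

/-- Reachability of (0-based) position `t` of the sequence `S` under the
cascade browse model: the product of the continuation probabilities of all
earlier products. -/
noncomputable def reach (θ : ℕ → ℝ) (S : List ℕ) (t : ℕ) : ℝ :=
  ∏ j ∈ Finset.range t, θ (S.getD j 0)

/-- Expected revenue of a sequence of products `S` under the cascade browse
model combined with the MNL choice model. -/
noncomputable def f (α β θ : ℕ → ℝ) (S : List ℕ) : ℝ :=
  (∑ t ∈ Finset.range (S.length - 1),
      reach θ S t * (1 - θ (S.getD t 0)) * g α β (S.take (t + 1)).toFinset)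
    + reach θ S (S.length - 1) * g α β S.toFinset

namespace Stmt7Aux

variable (α β θ : ℕ → ℝ)

lemma g_nonneg (hα : ∀ i, 0 ≤ α i) (hβ : ∀ i, 0 ≤ β i) (S : Finset ℕ) :
    0 ≤ g α β S := by
  have h1 : 0 ≤ ∑ i ∈ S, α i * β i :=
    Finset.sum_nonneg fun i _ => mul_nonneg (hα i) (hβ i)
  have h2 : 0 ≤ ∑ i ∈ S, β i := Finset.sum_nonneg fun i _ => hβ i
  exact div_nonneg h1 (by linarith)

lemma g_union_le (hα : ∀ i, 0 ≤ α i) (hβ : ∀ i, 0 ≤ β i) (A B : Finset ℕ) :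
    g α β (A ∪ B) ≤ g α β A + g α β B := by
  have hnum : ∀ S : Finset ℕ, 0 ≤ ∑ i ∈ S, α i * β i := fun S =>
    Finset.sum_nonneg fun i _ => mul_nonneg (hα i) (hβ i)
  have hden : ∀ S : Finset ℕ, 0 ≤ ∑ i ∈ S, β i := fun S =>
    Finset.sum_nonneg fun i _ => hβ i
  have hNle : ∑ i ∈ A ∪ B, α i * β i ≤ (∑ i ∈ A, α i * β i) + ∑ i ∈ B, α i * β i := by
    have := Finset.sum_union_inter (s₁ := A) (s₂ := B) (f := fun i => α i * β i)
    have := hnum (A ∩ B)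
    linarith
  have hDA : ∑ i ∈ A, β i ≤ ∑ i ∈ A ∪ B, β i :=
    Finset.sum_le_sum_of_subset_of_nonneg Finset.subset_union_left (fun i _ _ => hβ i)
  have hDB : ∑ i ∈ B, β i ≤ ∑ i ∈ A ∪ B, β i :=
    Finset.sum_le_sum_of_subset_of_nonneg Finset.subset_union_right (fun i _ _ => hβ i)
  have hpos : (0:ℝ) < (∑ i ∈ A ∪ B, β i) + 1 := by have := hden (A ∪ B); linarith
  have hposA : (0:ℝ) < (∑ i ∈ A, β i) + 1 := by have := hden A; linarith
  have hposB : (0:ℝ) < (∑ i ∈ B, β i) + 1 := by have := hden B; linarith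
  calc g α β (A ∪ B) = (∑ i ∈ A ∪ B, α i * β i) / ((∑ i ∈ A ∪ B, β i) + 1) := rfl
    _ ≤ ((∑ i ∈ A, α i * β i) + ∑ i ∈ B, α i * β i) / ((∑ i ∈ A ∪ B, β i) + 1) := by
        exact div_le_div₀ (add_nonneg (hnum A) (hnum B)) hNle hpos le_rfl
    _ = (∑ i ∈ A, α i * β i) / ((∑ i ∈ A ∪ B, β i) + 1)
        + (∑ i ∈ B, α i * β i) / ((∑ i ∈ A ∪ B, β i) + 1) := add_div _ _ _
    _ ≤ g α β A + g α β B := by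
        apply add_le_add
        · exact div_le_div₀ (hnum A) le_rfl hposA (by linarith)
        · exact div_le_div₀ (hnum B) le_rfl hposB (by linarith)

lemma reach_zero (L : List ℕ) : reach θ L 0 = 1 := by simp [reach]

lemma reach_succ (L : List ℕ) (t : ℕ) :
    reach θ L (t + 1) = reach θ L t * θ (L.getD t 0) :=
  Finset.prod_range_succ _ _

variable (hθ : ∀ i, 0 ≤ θ i ∧ θ i ≤ 1)
include hθ

lemma reach_nonneg (L : List ℕ) (t : ℕ) : 0 ≤ reach θ L t :=
  Finset.prod_nonneg fun j _ => (hθ _).1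

lemma reach_anti (L : List ℕ) {t s : ℕ} (h : t ≤ s) : reach θ L s ≤ reach θ L t := by
  induction s with
  | zero => simp at h; simp [h]
  | succ n ih =>
    rcases Nat.lt_or_ge t (n+1) with h' | h'
    · have h2 : t ≤ n := by omega
      calc reach θ L (n+1) = reach θ L n * θ (L.getD n 0) := reach_succ θ L n
        _ ≤ reach θ L n * 1 :=
            mul_le_mul_of_nonneg_left (hθ _).2 (reach_nonneg θ hθ L n)
        _ = reach θ L n := mul_one _
        _ ≤ reach θ L t := ih h2
    · have : t = n + 1 := by omega
      simp [this]

omit hθ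

lemma getD_take (L : List ℕ) {j m : ℕ} (h : j < m) :
    (L.take m).getD j 0 = L.getD j 0 := by
  simp [List.getD_eq_getElem?_getD, List.getElem?_take, h]

lemma getD_drop (L : List ℕ) (m j : ℕ) :
    (L.drop m).getD j 0 = L.getD (m + j) 0 := by
  simp [List.getD_eq_getElem?_getD, List.getElem?_drop]

lemma reach_take (L : List ℕ) {t m : ℕ} (h : t ≤ m) :
    reach θ (L.take m) t = reach θ L t :=
  Finset.prod_congr rfl fun j hj => by
    rw [getD_take L (lt_of_lt_of_le (Finset.mem_range.mp hj) h)]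

lemma reach_drop (L : List ℕ) (m t : ℕ) :
    reach θ L m * reach θ (L.drop m) t = reach θ L (m + t) := by
  unfold reach
  rw [Finset.prod_range_add]
  congr 1
  exact Finset.prod_congr rfl fun j _ => by rw [getD_drop]

lemma w_eq (L : List ℕ) (t : ℕ) :
    reach θ L t * (1 - θ (L.getD t 0)) = reach θ L t - reach θ L (t + 1) := by
  rw [reach_succ]; ring

lemma tele (L : List ℕ) (a n : ℕ) :
    ∑ j ∈ Finset.range n, reach θ L (a + j) * (1 - θ (L.getD (a + j) 0))
      = reach θ L a - reach θ L (a + n) := by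
  have h := Finset.sum_range_sub' (fun j => reach θ L (a + j)) n
  simp only [Nat.add_zero] at h
  rw [← h]
  exact Finset.sum_congr rfl fun j _ => by rw [w_eq, Nat.add_assoc]

lemma f_take (L : List ℕ) (m : ℕ) (hm1 : 1 ≤ m) (hmk : m ≤ L.length) :
    f α β θ (L.take m)
      = (∑ t ∈ Finset.range (m - 1),
          reach θ L t * (1 - θ (L.getD t 0)) * g α β (L.take (t + 1)).toFinset)
        + reach θ L (m - 1) * g α β (L.take m).toFinset := by
  unfold f
  have hlen : (L.take m).length = m := by
    rw [List.length_take]; omega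
  rw [hlen]
  congr 1
  · apply Finset.sum_congr rfl
    intro t ht
    have ht' : t < m - 1 := Finset.mem_range.mp ht
    rw [reach_take θ L (by omega), getD_take L (by omega), List.take_take,
      min_eq_left (by omega : t + 1 ≤ m)]
  · rw [reach_take θ L (by omega)]

lemma f_drop_mul (L : List ℕ) (m : ℕ) (hmk : m < L.length) :
    reach θ L m * f α β θ (L.drop m)
      = (∑ t ∈ Finset.range (L.length - m - 1),
          reach θ L (m + t) * (1 - θ (L.getD (m + t) 0))
            * g α β ((L.drop m).take (t + 1)).toFinset)
        + reach θ L (L.length - 1) * g α β (L.drop m).toFinset := by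
  unfold f
  have hlen : (L.drop m).length = L.length - m := List.length_drop
  rw [hlen, mul_add, Finset.mul_sum]
  congr 1
  · apply Finset.sum_congr rfl
    intro t _
    rw [getD_drop, ← mul_assoc, ← mul_assoc, reach_drop]
  · rw [← mul_assoc, reach_drop, show m + (L.length - m - 1) = L.length - 1 from by omega]

lemma key (hα : ∀ i, 0 ≤ α i) (hβ : ∀ i, 0 ≤ β i) (hθ : ∀ i, 0 ≤ θ i ∧ θ i ≤ 1)
    (L : List ℕ) (m : ℕ) (hm1 : 1 ≤ m) (hmk : m < L.length) :
    f α β θ L ≤ f α β θ (L.take m) + reach θ L m * f α β θ (L.drop m) := by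
  have hWnn : ∀ s : ℕ, 0 ≤ reach θ L s * (1 - θ (L.getD s 0)) := fun s =>
    mul_nonneg (reach_nonneg θ hθ L s) (by have := (hθ (L.getD s 0)).2; linarith)
  rw [f_take α β θ L m hm1 (le_of_lt hmk), f_drop_mul α β θ L m hmk]
  conv_lhs => rw [f]
  have hsplitsum : (∑ t ∈ Finset.range (L.length - 1),
        reach θ L t * (1 - θ (L.getD t 0)) * g α β (L.take (t + 1)).toFinset)
      = (∑ t ∈ Finset.range (m - 1),
          reach θ L t * (1 - θ (L.getD t 0)) * g α β (L.take (t + 1)).toFinset)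
        + ((∑ x ∈ Finset.range (L.length - m - 1),
            reach θ L (m + x) * (1 - θ (L.getD (m + x) 0))
              * g α β (L.take (m + x + 1)).toFinset)
          + reach θ L (m - 1) * (1 - θ (L.getD (m - 1) 0)) * g α β (L.take m).toFinset) := by
    rw [show L.length - 1 = (m - 1) + ((L.length - m - 1) + 1) from by omega,
      Finset.sum_range_add, Finset.sum_range_succ']
    congr 1
    congr 1
    · exact Finset.sum_congr rfl fun x _ => by
        rw [show m - 1 + (x + 1) = m + x from by omega]
    · rw [show m - 1 + 0 = m - 1 from by omega, show m - 1 + 1 = m from by omega]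
  rw [hsplitsum]
  -- termwise splitting of g over union
  have hsplitg : ∀ x : ℕ, (L.take (m + x + 1)).toFinset
      = (L.take m).toFinset ∪ ((L.drop m).take (x + 1)).toFinset := by
    intro x
    rw [show m + x + 1 = m + (x + 1) from by omega, List.take_add, List.toFinset_append]
  have hterm : ∀ x ∈ Finset.range (L.length - m - 1),
      reach θ L (m + x) * (1 - θ (L.getD (m + x) 0)) * g α β (L.take (m + x + 1)).toFinset
      ≤ reach θ L (m + x) * (1 - θ (L.getD (m + x) 0))
          * (g α β (L.take m).toFinset + g α β ((L.drop m).take (x + 1)).toFinset) := by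
    intro x _
    apply mul_le_mul_of_nonneg_left _ (hWnn (m + x))
    rw [hsplitg x]
    exact g_union_le α β hα hβ _ _
  have hsum2 : ∑ x ∈ Finset.range (L.length - m - 1),
      reach θ L (m + x) * (1 - θ (L.getD (m + x) 0)) * g α β (L.take (m + x + 1)).toFinset
      ≤ (reach θ L m - reach θ L (L.length - 1)) * g α β (L.take m).toFinset
        + ∑ x ∈ Finset.range (L.length - m - 1),
            reach θ L (m + x) * (1 - θ (L.getD (m + x) 0))
              * g α β ((L.drop m).take (x + 1)).toFinset := by
    calc _ ≤ ∑ x ∈ Finset.range (L.length - m - 1),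
        reach θ L (m + x) * (1 - θ (L.getD (m + x) 0))
          * (g α β (L.take m).toFinset + g α β ((L.drop m).take (x + 1)).toFinset) :=
        Finset.sum_le_sum hterm
      _ = (∑ x ∈ Finset.range (L.length - m - 1),
            reach θ L (m + x) * (1 - θ (L.getD (m + x) 0))) * g α β (L.take m).toFinset
          + ∑ x ∈ Finset.range (L.length - m - 1),
              reach θ L (m + x) * (1 - θ (L.getD (m + x) 0))
                * g α β ((L.drop m).take (x + 1)).toFinset := by
          rw [Finset.sum_mul, ← Finset.sum_add_distrib]
          exact Finset.sum_congr rfl fun x _ => by ring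
      _ = _ := by
          rw [tele θ L m (L.length - m - 1),
            show m + (L.length - m - 1) = L.length - 1 from by omega]
  -- final term
  have hLsplit : L.toFinset = (L.take m).toFinset ∪ (L.drop m).toFinset := by
    conv_lhs => rw [← List.take_append_drop m L]
    exact List.toFinset_append
  have hlast : reach θ L (L.length - 1) * g α β L.toFinset
      ≤ reach θ L (L.length - 1) * g α β (L.take m).toFinset
        + reach θ L (L.length - 1) * g α β (L.drop m).toFinset := by
    rw [← mul_add]
    apply mul_le_mul_of_nonneg_left _ (reach_nonneg θ hθ L _)
    rw [hLsplit]
    exact g_union_le α β hα hβ _ _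
  have hcollect : reach θ L (m - 1) * (1 - θ (L.getD (m - 1) 0)) * g α β (L.take m).toFinset
      + (reach θ L m - reach θ L (L.length - 1)) * g α β (L.take m).toFinset
      + reach θ L (L.length - 1) * g α β (L.take m).toFinset
      = reach θ L (m - 1) * g α β (L.take m).toFinset := by
    have hw := w_eq θ L (m - 1)
    rw [show m - 1 + 1 = m from by omega] at hw
    rw [hw]; ring
  linarith [hsum2, hlast, hcollect]

lemma f_take_le_max (L : List ℕ) (m : ℕ) (hm1 : 1 ≤ m) (hmk : m ≤ L.length)
    (hθ : ∀ i, 0 ≤ θ i ∧ θ i ≤ 1) :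
    ∃ t < m, f α β θ (L.take m) ≤ g α β (L.take (t + 1)).toFinset := by
  obtain ⟨t', ht'mem, hmax⟩ := Finset.exists_max_image (Finset.range m)
    (fun t => g α β (L.take (t + 1)).toFinset) ⟨0, Finset.mem_range.mpr (by omega)⟩
  have ht'm : t' < m := Finset.mem_range.mp ht'mem
  refine ⟨t', ht'm, ?_⟩
  set M := g α β (L.take (t' + 1)).toFinset with hM
  rw [f_take α β θ L m hm1 hmk]
  have hbd : ∑ t ∈ Finset.range (m - 1),
      reach θ L t * (1 - θ (L.getD t 0)) * g α β (L.take (t + 1)).toFinset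
      ≤ ∑ t ∈ Finset.range (m - 1), reach θ L t * (1 - θ (L.getD t 0)) * M := by
    apply Finset.sum_le_sum
    intro t ht
    have ht' : t < m - 1 := Finset.mem_range.mp ht
    apply mul_le_mul_of_nonneg_left _ (mul_nonneg (reach_nonneg θ hθ L t)
      (by have := (hθ (L.getD t 0)).2; linarith))
    exact hmax t (Finset.mem_range.mpr (by omega))
  have hsumw : ∑ t ∈ Finset.range (m - 1), reach θ L t * (1 - θ (L.getD t 0)) * M
      = (1 - reach θ L (m - 1)) * M := by
    rw [← Finset.sum_mul]
    congr 1
    have h := tele θ L 0 (m - 1)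
    simp only [Nat.zero_add] at h
    rw [h, reach_zero]
  have hlastbd : reach θ L (m - 1) * g α β (L.take m).toFinset
      ≤ reach θ L (m - 1) * M := by
    apply mul_le_mul_of_nonneg_left _ (reach_nonneg θ hθ L _)
    have := hmax (m - 1) (Finset.mem_range.mpr (by omega))
    rwa [show m - 1 + 1 = m from by omega] at this
  have : (1 - reach θ L (m - 1)) * M + reach θ L (m - 1) * M = M := by ring
  linarith [hbd, hsumw, hlastbd, this]

end Stmt7Aux

open Stmt7Aux in
/-- Lemma 4 / "Lemma 13": there is a pair `(𝒮, y)` feasible for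
problem P.A.1 with `g(𝒮 ∪ {y}) ≥ (1 - ρ) f(O)`. -/
theorem stmt7 (α β θ : ℕ → ℝ) (hα : ∀ i, 0 ≤ α i) (hβ : ∀ i, 0 ≤ β i)
    (hθ : ∀ i, 0 ≤ θ i ∧ θ i ≤ 1)
    (B : ℕ) (hB : 1 ≤ B) (ρ : ℝ) (hρ0 : 0 ≤ ρ) (hρ1 : ρ ≤ 1)
    (O : List ℕ) (hO : O.Nodup) (hOB : O.length ≤ B)
    (hopt : ∀ L : List ℕ, L.Nodup → L.length ≤ B → f α β θ L ≤ f α β θ O)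
    (hfO : 0 < f α β θ O) :
    ∃ (S : Finset ℕ) (y : ℕ), y ∉ S ∧ ρ ≤ ∏ i ∈ S, θ i ∧ S.card < B ∧
      (1 - ρ) * f α β θ O ≤ g α β (insert y S) := by
  classical
  have hk : 1 ≤ O.length := by
    by_contra h
    have hO0 : O = [] := List.eq_nil_of_length_eq_zero (by omega)
    rw [hO0] at hfO
    simp [f, reach, g] at hfO
  set T := Nat.findGreatest (fun t => ρ ≤ reach θ O t) (O.length - 1) with hT
  have hTk : T ≤ O.length - 1 := Nat.findGreatest_le _
  have hTspec : ρ ≤ reach θ O T := by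
    have h0 : (fun t => ρ ≤ reach θ O t) 0 := by
      simpa [reach_zero] using hρ1
    have h1 := Nat.findGreatest_spec (P := fun t => ρ ≤ reach θ O t)
      (Nat.zero_le (O.length - 1)) h0
    rw [hT]
    exact h1
  set m := T + 1 with hm
  have hm1 : 1 ≤ m := by omega
  have hmk : m ≤ O.length := by omega
  have hstep : (1 - ρ) * f α β θ O ≤ f α β θ (O.take m) := by
    rcases eq_or_lt_of_le hmk with heq | hlt
    · rw [heq, List.take_length]
      nlinarith [hfO]
    · have hρm : reach θ O m < ρ := by
        by_contra h
        exact Nat.findGreatest_is_greatest (by omega : T < m) (by omega)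
          (not_lt.mp h)
      have hkey := key α β θ hα hβ hθ O m hm1 hlt
      have hdrop : f α β θ (O.drop m) ≤ f α β θ O := by
        apply hopt
        · exact (List.drop_sublist m O).nodup hO
        · rw [List.length_drop]; omega
      have hr0 : 0 ≤ reach θ O m := reach_nonneg θ hθ O m
      have h1 : reach θ O m * f α β θ (O.drop m) ≤ reach θ O m * f α β θ O :=
        mul_le_mul_of_nonneg_left hdrop hr0
      nlinarith [mul_pos (sub_pos.mpr hρm) hfO]
  obtain ⟨t', ht'm, hmaxg⟩ := f_take_le_max α β θ O m hm1 hmk hθ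
  have ht'k : t' < O.length := by omega
  have htake1 : O.take (t' + 1) = O.take t' ++ [O.getD t' 0] := by
    rw [List.take_succ]
    simp [List.getElem?_eq_getElem ht'k, List.getD_eq_getElem _ _ ht'k]
  have hnodup1 : (O.take (t' + 1)).Nodup := (List.take_sublist _ _).nodup hO
  have hynotin : O.getD t' 0 ∉ O.take t' := by
    rw [htake1] at hnodup1
    rw [List.nodup_append] at hnodup1
    intro hmem
    exact hnodup1.2.2 _ hmem _ (by simp) rfl
  refine ⟨(O.take t').toFinset, O.getD t' 0, ?_, ?_, ?_, ?_⟩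
  · rw [List.mem_toFinset]; exact hynotin
  · have hnodup0 : (O.take t').Nodup := (List.take_sublist _ _).nodup hO
    rw [List.prod_toFinset θ hnodup0]
    have hprodeq : ∀ n, n ≤ O.length → ((O.take n).map θ).prod = reach θ O n := by
      intro n
      induction n with
      | zero => intro _; simp [reach]
      | succ p ih =>
        intro hp
        have hpk : p < O.length := by omega
        have : O.take (p + 1) = O.take p ++ [O.getD p 0] := by
          rw [List.take_succ]
          simp [List.getElem?_eq_getElem hpk, List.getD_eq_getElem _ _ hpk]
        rw [this, List.map_append, List.prod_append, ih (by omega), reach_succ]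
        simp
    rw [hprodeq t' (by omega)]
    exact le_trans hTspec (reach_anti θ hθ O (by omega : t' ≤ T))
  · rw [List.toFinset_card_of_nodup ((List.take_sublist _ _).nodup hO),
      List.length_take]
    omega
  · have hins : insert (O.getD t' 0) (O.take t').toFinset = (O.take (t' + 1)).toFinset := by
      rw [htake1, List.toFinset_append]
      ext x
      simp [or_comm]
    rw [hins]
    exact le_trans hstep (hmaxg)
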